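/- arXiv:1610.05178 — 6 statements merged into one kernel-verified Lean document; each statement's English description precedes it below -/
import Mathlib

section
/- Let k be a commutative ring, A and B associative (not necessarily unital) k-algebras, M a faithful left A-module and N a faithful left B-module. Suppose moreover that elements of M can be separated by k-module homomorphisms M → k (i.e., for every nonzero u ∈ M there is a k-linear map φ: M → k with φ(u) ≠ 0), and that every finite subset of B is contained in a free k-submodule of B. Then the left (A ⊗_k B)-module M ⊗_k N is faithful. -/
open TensorProduct

/-- **Corollary (to the proof of the main theorem).**
Let `k` be a commutative ring, `A` and `B` associative (not necessarily unital) `k`-algebras,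
`M` a faithful left `A`-module and `N` a faithful left `B`-module (module structures encoded
by multiplicative `k`-linear action maps into `Module.End k _`, faithfulness = injectivity).
Suppose moreover that elements of `M` are separated by `k`-module homomorphisms `M → k`,
and that every finite subset of `B` is contained in a free `k`-submodule of `B`.
Then the left `(A ⊗[k] B)`-module `M ⊗[k] N` is faithful, i.e. its action map
`(homTensorHomMap k M N M N) ∘ₗ (map μ ν)` is injective. -/
theorem faithful_tensor_faithful_of_commRing
    (k : Type*) [CommRing k] (A B M N : Type*)
    [NonUnitalRing A] [Module k A] [SMulCommClass k A A] [IsScalarTower k A A]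
    [NonUnitalRing B] [Module k B] [SMulCommClass k B B] [IsScalarTower k B B]
    [AddCommGroup M] [Module k M] [AddCommGroup N] [Module k N]
    (μ : A →ₗ[k] Module.End k M) (ν : B →ₗ[k] Module.End k N)
    (hμ : ∀ a a' : A, μ (a * a') = μ a * μ a')
    (hν : ∀ b b' : B, ν (b * b') = ν b * ν b')
    (hM : Function.Injective μ) (hN : Function.Injective ν)
    (hsep : ∀ u : M, u ≠ 0 → ∃ φ : M →ₗ[k] k, φ u ≠ 0)
    (hfree : ∀ s : Finset B, ∃ S : Submodule k B, (s : Set B) ⊆ S ∧ Module.Free k S) :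
    Function.Injective
      ((TensorProduct.homTensorHomMap (RingHom.id k) M N M N).comp (TensorProduct.map μ ν)) := by
  classical
  rw [injective_iff_map_eq_zero]
  intro f hf
  -- Step A: for every `φ : M →ₗ[k] k` and `u : M`, the contraction of `f` against `(φ, u)`
  -- in the first factor vanishes.
  have key : ∀ (φ : M →ₗ[k] k) (u : M),
      (TensorProduct.lid k B) ((LinearMap.rTensor B (φ ∘ₗ (μ.flip u))) f) = 0 := by
    intro φ u
    apply hN
    rw [map_zero]
    ext v
    have h1 : ∀ g : A ⊗[k] B,
        (ν ((TensorProduct.lid k B) ((LinearMap.rTensor B (φ ∘ₗ (μ.flip u))) g))) v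
        = (TensorProduct.lid k N) ((LinearMap.rTensor N φ)
            ((((TensorProduct.homTensorHomMap (RingHom.id k) M N M N).comp
                (TensorProduct.map μ ν)) g) (u ⊗ₜ[k] v))) := by
      intro g
      induction g using TensorProduct.induction_on with
      | zero => simp
      | tmul a b => simp [TensorProduct.homTensorHomMap_apply, LinearMap.flip_apply]
      | add x y hx hy => simp [map_add, hx, hy]
    have h2 := h1 f
    rw [hf] at h2
    simpa using h2
  -- Step B: write `f` with components of the second factor inside a free submodule `S`.
  obtain ⟨t, ht⟩ := TensorProduct.exists_finset f
  obtain ⟨S, hS, hfreeS⟩ := hfree (t.image Prod.snd)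
  haveI := hfreeS
  set b := Module.Free.chooseBasis k S with hb
  set ι := Module.Free.ChooseBasisIndex k S
  have hmem : ∀ p ∈ t, p.2 ∈ S := fun p hp =>
    hS (Finset.mem_coe.mpr (Finset.mem_image_of_mem Prod.snd hp))
  set g : A ⊗[k] S := ∑ p ∈ t.attach, p.1.1 ⊗ₜ[k] (⟨p.1.2, hmem p.1 p.2⟩ : S) with hg
  set e : (A ⊗[k] S) ≃ₗ[k] (ι →₀ A) :=
    (TensorProduct.congr (LinearEquiv.refl k A) b.repr).trans
      (TensorProduct.finsuppScalarRight k k A ι) with he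
  set c : ι →₀ A := e g with hc
  have hsymm : ∀ (j : ι) (a : A), e.symm (Finsupp.single j a) = a ⊗ₜ[k] (b j) := by
    intro j a
    rw [he]
    simp [TensorProduct.congr, Module.Basis.repr_symm_single_one]
  have hgc : g = c.sum fun j a => a ⊗ₜ[k] (b j : S) := by
    have h0 : g = e.symm.toLinearMap c := (LinearEquiv.symm_apply_apply e g).symm
    rw [h0, ← Finsupp.sum_single c, map_finsuppSum]
    simp only [Finsupp.sum_single]
    exact Finsupp.sum_congr fun j _ => hsymm j (c j)
  have hfc : f = c.sum fun j a => a ⊗ₜ[k] ((b j : S) : B) := by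
    have hfg : f = LinearMap.lTensor A S.subtype g := by
      rw [ht, hg, map_sum]
      rw [← Finset.sum_attach t fun p => p.1 ⊗ₜ[k] p.2]
      exact Finset.sum_congr rfl fun p _ => by simp
    rw [hfg, hgc, map_finsuppSum]
    exact Finsupp.sum_congr fun j _ => by simp
  -- Step C: each coefficient `c j` vanishes.
  have hcj : ∀ j : ι, c j = 0 := by
    intro j
    apply hM
    rw [map_zero]
    ext u
    simp only [LinearMap.zero_apply]
    by_contra hne
    obtain ⟨φ, hφ⟩ := hsep _ hne
    apply hφ
    have h3 := key φ u
    rw [hfc, map_finsuppSum, map_finsuppSum] at h3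
    have h4 : (c.sum fun j' a => φ ((μ a) u) • ((b j' : S) : B)) = 0 := by
      rw [← h3]
      exact (Finsupp.sum_congr fun j' _ => by simp [LinearMap.flip_apply]).symm
    have h5 : (c.sum fun j' a => φ ((μ a) u) • (b j' : S)) = 0 := by
      apply Submodule.injective_subtype S
      rw [map_finsuppSum, map_zero]
      rw [← h4]
      exact Finsupp.sum_congr fun j' _ => by simp
    have h6 : (c.sum fun j' a => Finsupp.single j' (φ ((μ a) u))) = (0 : ι →₀ k) := by
      have := congrArg b.repr h5
      rw [map_finsuppSum, map_zero] at this
      rw [← this]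
      exact Finsupp.sum_congr fun j' _ => by
        rw [map_smul, b.repr_self, Finsupp.smul_single, smul_eq_mul, mul_one]
    have h7 := DFunLike.congr_fun h6 j
    rw [Finsupp.sum_apply, Finsupp.coe_zero, Pi.zero_apply] at h7
    simp only [Finsupp.single_apply] at h7
    rw [Finsupp.sum] at h7
    rw [Finset.sum_ite_eq' c.support j (fun j' => φ ((μ (c j')) u))] at h7
    by_cases hjs : j ∈ c.support
    · rw [if_pos hjs] at h7; exact h7
    · rw [Finsupp.notMem_support_iff.mp hjs]; simp
  -- Conclude.
  have : c = 0 := Finsupp.ext hcj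
  rw [hfc, this, Finsupp.sum_zero_index]
end

section
/- Let C be a commutative principal ideal domain with infinitely many nonzero prime ideals, and let P_0, P_1 be two disjoint infinite sets of nonzero prime ideals of C. Take k = A = B = C, M = ⊕_{p ∈ P_0} C/p and N = ⊕_{p ∈ P_1} C/p. Then M is a faithful A-module, N is a faithful B-module, A ⊗_k B is nonzero, but M ⊗_k N = 0; in particular M ⊗_k N is not a faithful (A ⊗_k B)-module. (This gives a counterexample to the conclusion of the tensor-product faithfulness theorem when the base ring k is not a field, even though every finite subset of A and of B trivially lies in a free k-submodule.) -/
open DirectSum TensorProduct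

/-- Auxiliary: a direct sum of quotients by an infinite set of nonzero primes of a PID is
a faithful module. -/
theorem faithful_aux
    (C : Type*) [CommRing C] [IsDomain C] [IsPrincipalIdealRing C]
    (P : Set (Ideal C)) (h : P.Infinite)
    (hprime : ∀ p ∈ P, p.IsPrime) (hne : ∀ p ∈ P, p ≠ ⊥) :
    FaithfulSMul C (⨁ p : P, C ⧸ (p : Ideal C)) := by
  classical
  constructor
  intro c₁ c₂ hc
  by_contra hne'
  have hc0 : c₁ - c₂ ≠ 0 := sub_ne_zero.mpr hne'
  -- each p ∈ P contains c₁ - c₂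
  have hmem : ∀ p : P, c₁ - c₂ ∈ (p : Ideal C) := by
    intro p
    have h1 := hc (DirectSum.lof C P (fun p : P => C ⧸ (p : Ideal C)) p
      (Ideal.Quotient.mk (p : Ideal C) 1))
    have h2 := DFunLike.congr_fun h1 p
    rw [DirectSum.smul_apply, DirectSum.smul_apply, DirectSum.lof_apply] at h2
    have h3 : Ideal.Quotient.mk (p : Ideal C) c₁ = Ideal.Quotient.mk (p : Ideal C) c₂ := by
      simpa [Algebra.smul_def, Ideal.Quotient.algebraMap_eq] using h2
    have h4 : Ideal.Quotient.mk (p : Ideal C) (c₁ - c₂) = 0 := by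
      rw [map_sub, h3, sub_self]
    exact (Ideal.Quotient.eq_zero_iff_mem).mp h4
  -- but only finitely many primes contain a nonzero element
  have : IsDedekindDomain C := inferInstance
  have hfin := Ideal.finite_factors (I := Ideal.span {c₁ - c₂})
    (by simpa using hc0)
  have hinj : Function.Injective
      (fun p : P => (⟨(p : Ideal C), hprime p p.2, hne p p.2⟩ :
        IsDedekindDomain.HeightOneSpectrum C)) := by
    intro p q hpq
    exact Subtype.ext (congrArg IsDedekindDomain.HeightOneSpectrum.asIdeal hpq)
  have hPfin : P.Finite := by
    rw [← Set.finite_coe_iff]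
    rw [← Set.finite_coe_iff] at hfin
    refine Finite.of_injective (fun p : P =>
      (⟨⟨(p : Ideal C), hprime p p.2, hne p p.2⟩, ?_⟩ :
        {v : IsDedekindDomain.HeightOneSpectrum C | v.asIdeal ∣ Ideal.span {c₁ - c₂}})) ?_
    · exact (Ideal.dvd_iff_le).mpr ((Ideal.span_singleton_le_iff_mem _).mpr (hmem p))
    · intro p q hpq
      exact hinj (by simpa using congrArg Subtype.val hpq)
  exact h hPfin

/-- Auxiliary: the tensor product of quotients by comaximal ideals is trivial. -/
theorem subsingleton_quot_tmul_quot
    (C : Type*) [CommRing C] {p q : Ideal C} (hpq : p ⊔ q = ⊤) :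
    Subsingleton ((C ⧸ p) ⊗[C] (C ⧸ q)) := by
  obtain ⟨a, ha, b, hb, hab⟩ := Submodule.mem_sup.mp (hpq ▸ Submodule.mem_top (x := (1 : C)))
  constructor
  intro z w
  suffices h : ∀ z : (C ⧸ p) ⊗[C] (C ⧸ q), z = 0 by rw [h z, h w]
  intro z
  induction z using TensorProduct.induction_on with
  | zero => rfl
  | tmul x y =>
    obtain ⟨x, rfl⟩ := Ideal.Quotient.mk_surjective x
    obtain ⟨y, rfl⟩ := Ideal.Quotient.mk_surjective y
    have hax : (a • (Ideal.Quotient.mk p x) : C ⧸ p) = 0 := by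
      rw [Algebra.smul_def, Ideal.Quotient.algebraMap_eq, ← map_mul,
        Ideal.Quotient.eq_zero_iff_mem]
      exact Ideal.mul_mem_right _ _ ha
    have hby : (b • (Ideal.Quotient.mk q y) : C ⧸ q) = 0 := by
      rw [Algebra.smul_def, Ideal.Quotient.algebraMap_eq, ← map_mul,
        Ideal.Quotient.eq_zero_iff_mem]
      exact Ideal.mul_mem_right _ _ hb
    calc (Ideal.Quotient.mk p x) ⊗ₜ[C] (Ideal.Quotient.mk q y)
        = (a + b) • ((Ideal.Quotient.mk p x) ⊗ₜ[C] (Ideal.Quotient.mk q y)) := by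
          rw [hab, one_smul]
      _ = (a • Ideal.Quotient.mk p x) ⊗ₜ[C] (Ideal.Quotient.mk q y)
          + (Ideal.Quotient.mk p x) ⊗ₜ[C] (b • Ideal.Quotient.mk q y) := by
          rw [add_smul, TensorProduct.smul_tmul', TensorProduct.tmul_smul]
      _ = 0 := by rw [hax, hby, zero_tmul, tmul_zero, add_zero]
  | add x y hx hy => rw [hx, hy, add_zero]

/-- **Counterexample (i).**  Let `C` be a commutative principal ideal domain with
infinitely many nonzero prime ideals and `P₀`, `P₁` two disjoint infinite sets of nonzero
prime ideals.  With `k = A = B = C`, `M = ⨁_{p ∈ P₀} C/p` and `N = ⨁_{p ∈ P₁} C/p`: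
`M` is a faithful `A`-module, `N` is a faithful `B`-module, `A ⊗[k] B = C ⊗[C] C` is
nonzero, but `M ⊗[k] N = 0`; in particular the action map of `A ⊗[k] B` on `M ⊗[k] N`
(sending `a ⊗ b` to the endomorphism `u ⊗ v ↦ (a • u) ⊗ (b • v)`) is not injective,
so `M ⊗[k] N` is not a faithful `(A ⊗[k] B)`-module. -/
theorem counterexample_directSum_quotients
    (C : Type*) [CommRing C] [IsDomain C] [IsPrincipalIdealRing C]
    (P₀ P₁ : Set (Ideal C)) (h₀ : P₀.Infinite) (h₁ : P₁.Infinite) (hd : Disjoint P₀ P₁)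
    (hprime₀ : ∀ p ∈ P₀, p.IsPrime) (hne₀ : ∀ p ∈ P₀, p ≠ ⊥)
    (hprime₁ : ∀ p ∈ P₁, p.IsPrime) (hne₁ : ∀ p ∈ P₁, p ≠ ⊥) :
    FaithfulSMul C (⨁ p : P₀, C ⧸ (p : Ideal C)) ∧
    FaithfulSMul C (⨁ p : P₁, C ⧸ (p : Ideal C)) ∧
    Nontrivial (C ⊗[C] C) ∧
    Subsingleton ((⨁ p : P₀, C ⧸ (p : Ideal C)) ⊗[C] (⨁ p : P₁, C ⧸ (p : Ideal C))) ∧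
    ¬ Function.Injective
      ((TensorProduct.homTensorHomMap (RingHom.id C)
          (⨁ p : P₀, C ⧸ (p : Ideal C)) (⨁ p : P₁, C ⧸ (p : Ideal C))
          (⨁ p : P₀, C ⧸ (p : Ideal C)) (⨁ p : P₁, C ⧸ (p : Ideal C))).comp
        (TensorProduct.map
          (LinearMap.lsmul C (⨁ p : P₀, C ⧸ (p : Ideal C)))
          (LinearMap.lsmul C (⨁ p : P₁, C ⧸ (p : Ideal C))))) := by
  classical
  have hsub : Subsingleton ((⨁ p : P₀, C ⧸ (p : Ideal C)) ⊗[C] (⨁ p : P₁, C ⧸ (p : Ideal C))) := by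
    have hcomp : ∀ (i : P₀ × P₁),
        Subsingleton ((C ⧸ (i.1 : Ideal C)) ⊗[C] (C ⧸ (i.2 : Ideal C))) := by
      rintro ⟨p, q⟩
      refine subsingleton_quot_tmul_quot C ?_
      haveI := hprime₀ p p.2
      haveI := hprime₁ q q.2
      have hp : (p : Ideal C).IsMaximal := IsPrime.to_maximal_ideal (hne₀ p p.2)
      have hq : (q : Ideal C).IsMaximal := IsPrime.to_maximal_ideal (hne₁ q q.2)
      have hneq : (p : Ideal C) ≠ (q : Ideal C) := by
        intro h
        exact (Set.disjoint_left.mp hd p.2) (h ▸ q.2)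
      exact hp.coprime_of_ne hq hneq
    haveI := hcomp
    have e := TensorProduct.directSum C C (fun p : P₀ => C ⧸ (p : Ideal C))
      (fun q : P₁ => C ⧸ (q : Ideal C))
    haveI : Subsingleton (⨁ i : P₀ × P₁, (C ⧸ (i.1 : Ideal C)) ⊗[C] (C ⧸ (i.2 : Ideal C))) := by
      infer_instance
    exact e.toEquiv.subsingleton
  have hnontriv : Nontrivial (C ⊗[C] C) := by
    refine ⟨(1 : C) ⊗ₜ[C] (1 : C), 0, fun h => ?_⟩
    have := congrArg (TensorProduct.lid C C) h
    simp at this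
  refine ⟨faithful_aux C P₀ h₀ hprime₀ hne₀, faithful_aux C P₁ h₁ hprime₁ hne₁, hnontriv, hsub, ?_⟩
  intro hinj
  exact not_subsingleton (C ⊗[C] C) hinj.subsingleton
end

section
/- Let C be a commutative principal ideal domain with infinitely many nonzero prime ideals, and let P_0, P_1 be two disjoint infinite sets of nonzero prime ideals of C. Let C⁺ be the commutative C-algebra obtained from the polynomial ring over C in indeterminates y_p, one for each p ∈ P_0 ∪ P_1, by imposing the relations c·y_p = 0 for every c ∈ p and every p ∈ P_0 ∪ P_1. Set k = C⁺, let M be the ideal of k generated by {y_p : p ∈ P_0}, N the ideal of k generated by {y_p : p ∈ P_1}, A = k/N and B = k/M. Then M·N = 0, so M is a left A-module and N a left B-module; M is faithful over A, N is faithful over B, A ⊗_k B ≅ k/(M + N) ≅ C is nonzero, but M ⊗_k N = 0, hence M ⊗_k N is not a faithful (A ⊗_k B)-module. (Here k-module homomorphisms into k separate the elements of M and of N, since M and N embed in k.) -/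
open TensorProduct

/-- The ideal of relations `c • y_p = 0` (for `c ∈ p`, `p ∈ P₀ ∪ P₁`) in the polynomial
ring over `C` in indeterminates `y_p`, `p ∈ P₀ ∪ P₁`. -/
noncomputable def CPlusRel (C : Type*) [CommRing C] (P₀ P₁ : Set (Ideal C)) :
    Ideal (MvPolynomial (↥(P₀ ∪ P₁)) C) :=
  Ideal.span { f | ∃ (p : ↥(P₀ ∪ P₁)) (c : C), c ∈ (p : Ideal C) ∧
    f = MvPolynomial.C c * MvPolynomial.X p }

/-- The commutative `C`-algebra `k = C⁺`, obtained from the polynomial ring over `C` in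
indeterminates `y_p` (`p ∈ P₀ ∪ P₁`) by imposing the relations `c·y_p = 0` for `c ∈ p`. -/
abbrev CPlus (C : Type*) [CommRing C] (P₀ P₁ : Set (Ideal C)) : Type _ :=
  MvPolynomial (↥(P₀ ∪ P₁)) C ⧸ CPlusRel C P₀ P₁

/-- The ideal `M` of `k` generated by the `y_p` with `p ∈ P₀`. -/
noncomputable def MIdeal (C : Type*) [CommRing C] (P₀ P₁ : Set (Ideal C)) : Ideal (CPlus C P₀ P₁) :=
  Ideal.span { x | ∃ p : ↥(P₀ ∪ P₁), (p : Ideal C) ∈ P₀ ∧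
    x = Ideal.Quotient.mk (CPlusRel C P₀ P₁) (MvPolynomial.X p) }

/-- The ideal `N` of `k` generated by the `y_p` with `p ∈ P₁`. -/
noncomputable def NIdeal (C : Type*) [CommRing C] (P₀ P₁ : Set (Ideal C)) : Ideal (CPlus C P₀ P₁) :=
  Ideal.span { x | ∃ p : ↥(P₀ ∪ P₁), (p : Ideal C) ∈ P₁ ∧
    x = Ideal.Quotient.mk (CPlusRel C P₀ P₁) (MvPolynomial.X p) }



section QuotTensorQuot

variable (R : Type*) [CommRing R] (I J : Ideal R)

/-- Auxiliary algebra map `R ⧸ I →ₐ[R] R ⧸ K` for `I ≤ K`. -/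
noncomputable def quotLiftLe {K : Ideal R} (h : I ≤ K) : (R ⧸ I) →ₐ[R] R ⧸ K where
  toRingHom := Ideal.quotientMap K (RingHom.id R) (by rw [Ideal.comap_id]; exact h)
  commutes' r := by
    simp [Ideal.Quotient.algebraMap_eq, Ideal.quotientMap_mk]

noncomputable def qtqHom : ((R ⧸ I) ⊗[R] (R ⧸ J)) →+* R ⧸ (I ⊔ J) :=
  (Algebra.TensorProduct.lift (quotLiftLe R I (le_sup_left : I ≤ I ⊔ J))
      (quotLiftLe R J (le_sup_right : J ≤ I ⊔ J)) (fun _ _ => Commute.all _ _)).toRingHom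

lemma qtqHom_tmul (a b : R) :
    qtqHom R I J (Ideal.Quotient.mk I a ⊗ₜ[R] Ideal.Quotient.mk J b)
      = Ideal.Quotient.mk (I ⊔ J) (a * b) := by
  have h := Algebra.TensorProduct.lift_tmul (S := R)
    (quotLiftLe R I (le_sup_left : I ≤ I ⊔ J))
    (quotLiftLe R J (le_sup_right : J ≤ I ⊔ J)) (fun _ _ => Commute.all _ _)
    (Ideal.Quotient.mk I a) (Ideal.Quotient.mk J b)
  have h1 : quotLiftLe R I (le_sup_left : I ≤ I ⊔ J) (Ideal.Quotient.mk I a)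
      = Ideal.Quotient.mk (I ⊔ J) a := rfl
  have h2 : quotLiftLe R J (le_sup_right : J ≤ I ⊔ J) (Ideal.Quotient.mk J b)
      = Ideal.Quotient.mk (I ⊔ J) b := rfl
  show Algebra.TensorProduct.lift _ _ _ _ = _
  rw [h, h1, h2, ← map_mul]

lemma tmul_one_eq_one_tmul (z : R) :
    (Ideal.Quotient.mk I z) ⊗ₜ[R] (1 : R ⧸ J) = (1 : R ⧸ I) ⊗ₜ[R] (Ideal.Quotient.mk J z) := by
  have e1 : (Ideal.Quotient.mk I z : R ⧸ I) = z • (1 : R ⧸ I) := by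
    rw [Algebra.smul_def, Ideal.Quotient.algebraMap_eq, mul_one]
  have e2 : (Ideal.Quotient.mk J z : R ⧸ J) = z • (1 : R ⧸ J) := by
    rw [Algebra.smul_def, Ideal.Quotient.algebraMap_eq, mul_one]
  rw [e1, e2, TensorProduct.smul_tmul]

noncomputable def qtqInv : (R ⧸ (I ⊔ J)) →+* ((R ⧸ I) ⊗[R] (R ⧸ J)) :=
  Ideal.Quotient.lift (I ⊔ J) (algebraMap R ((R ⧸ I) ⊗[R] (R ⧸ J))) (by
    intro a ha
    rcases Submodule.mem_sup.mp ha with ⟨y, hy, z, hz, rfl⟩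
    rw [Algebra.TensorProduct.algebraMap_apply, Ideal.Quotient.algebraMap_eq, map_add,
      TensorProduct.add_tmul]
    have h1 : (Ideal.Quotient.mk I y : R ⧸ I) = 0 := Ideal.Quotient.eq_zero_iff_mem.mpr hy
    rw [h1, TensorProduct.zero_tmul, zero_add, tmul_one_eq_one_tmul,
      Ideal.Quotient.eq_zero_iff_mem.mpr hz, TensorProduct.tmul_zero])

lemma qtqInv_mk (a : R) :
    qtqInv R I J (Ideal.Quotient.mk (I ⊔ J) a)
      = (Ideal.Quotient.mk I a) ⊗ₜ[R] (1 : R ⧸ J) := by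
  rw [qtqInv, Ideal.Quotient.lift_mk, Algebra.TensorProduct.algebraMap_apply,
    Ideal.Quotient.algebraMap_eq]

/-- `(R ⧸ I) ⊗[R] (R ⧸ J) ≃+* R ⧸ (I ⊔ J)`. -/
noncomputable def quotTensorQuotRingEquiv :
    ((R ⧸ I) ⊗[R] (R ⧸ J)) ≃+* R ⧸ (I ⊔ J) := by
  refine RingEquiv.ofRingHom (qtqHom R I J) (qtqInv R I J) ?_ ?_
  swap
  · apply RingHom.ext
    intro z
    simp only [RingHom.coe_comp, RingHom.coe_coe, Function.comp_apply, RingHom.id_apply]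
    induction z using TensorProduct.induction_on with
    | zero => simp
    | tmul a b =>
      obtain ⟨a, rfl⟩ := Ideal.Quotient.mk_surjective a
      obtain ⟨b, rfl⟩ := Ideal.Quotient.mk_surjective b
      rw [qtqHom_tmul, qtqInv_mk]
      have e1 : (Ideal.Quotient.mk I (a * b) : R ⧸ I) = b • Ideal.Quotient.mk I a := by
        rw [Algebra.smul_def, Ideal.Quotient.algebraMap_eq, ← map_mul, mul_comm]
      have e2 : (Ideal.Quotient.mk J b : R ⧸ J) = b • (1 : R ⧸ J) := by
        rw [Algebra.smul_def, Ideal.Quotient.algebraMap_eq, mul_one]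
      rw [e1, TensorProduct.smul_tmul, ← e2]
    | add x y hx hy => rw [map_add, map_add, hx, hy]
  · apply RingHom.ext
    intro z
    simp only [RingHom.coe_comp, RingHom.coe_coe, Function.comp_apply, RingHom.id_apply]
    obtain ⟨a, rfl⟩ := Ideal.Quotient.mk_surjective z
    rw [qtqInv_mk]
    have : (1 : R ⧸ J) = Ideal.Quotient.mk J 1 := rfl
    rw [this, qtqHom_tmul, mul_one]

end QuotTensorQuot

section Aux

variable {C : Type*} [CommRing C] {P₀ P₁ : Set (Ideal C)}

lemma gen_mem_rel (p : ↥(P₀ ∪ P₁)) {c : C} (hc : c ∈ (p : Ideal C)) :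
    MvPolynomial.C c * MvPolynomial.X p ∈ CPlusRel C P₀ P₁ :=
  Ideal.subset_span ⟨p, c, hc, rfl⟩

lemma monomial_eq_mul_X {m : ↥(P₀ ∪ P₁) →₀ ℕ} {p : ↥(P₀ ∪ P₁)} (hp : p ∈ m.support) (c : C) :
    MvPolynomial.monomial m c
      = MvPolynomial.monomial (m - Finsupp.single p 1) c * MvPolynomial.X p := by
  have hm : m = Finsupp.single p 1 + (m - Finsupp.single p 1) := by
    have hmp : m p ≠ 0 := Finsupp.mem_support_iff.mp hp
    ext q
    rcases eq_or_ne q p with rfl | hq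
    · simp only [Finsupp.add_apply, Finsupp.tsub_apply, Finsupp.single_eq_same]
      omega
    · simp [Finsupp.add_apply, Finsupp.tsub_apply, Finsupp.single_apply, hq,
        (Ne.symm hq : p ≠ q)]
  conv_lhs => rw [hm]
  rw [MvPolynomial.monomial_single_add, pow_one]
  ring

lemma monomial_mem_rel {m : ↥(P₀ ∪ P₁) →₀ ℕ} {p : ↥(P₀ ∪ P₁)} (hp : p ∈ m.support) {a : C}
    (c : C) (ha : a ∈ (p : Ideal C)) :
    MvPolynomial.monomial m (a * c) ∈ CPlusRel C P₀ P₁ := by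
  have h : MvPolynomial.monomial m (a * c) =
      (MvPolynomial.C a * MvPolynomial.X p)
        * MvPolynomial.monomial (m - Finsupp.single p 1) c := by
    rw [← MvPolynomial.C_mul_monomial, monomial_eq_mul_X hp]
    ring
  rw [h]
  exact Ideal.mul_mem_right _ _ (gen_mem_rel p ha)

lemma coprime_aux [IsDomain C] [IsPrincipalIdealRing C]
    (hup : ∀ P ∈ P₀ ∪ P₁, Ideal.IsPrime P) (hun : ∀ P ∈ P₀ ∪ P₁, P ≠ ⊥)
    {p q : ↥(P₀ ∪ P₁)} (hpq : p ≠ q) :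
    ∃ a b : C, a ∈ (p : Ideal C) ∧ b ∈ (q : Ideal C) ∧ a + b = 1 := by
  have h1 : (p : Ideal C).IsMaximal :=
    @IsPrime.to_maximal_ideal _ _ _ _ _ (hup p p.2) (hun p p.2)
  have h2 : (q : Ideal C).IsMaximal :=
    @IsPrime.to_maximal_ideal _ _ _ _ _ (hup q q.2) (hun q q.2)
  have h3 : (p : Ideal C) ⊔ (q : Ideal C) = ⊤ :=
    Ideal.IsMaximal.coprime_of_ne h1 h2 (Subtype.coe_injective.ne hpq)
  have h4 : (1 : C) ∈ (p : Ideal C) ⊔ (q : Ideal C) := by rw [h3]; trivial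
  rcases Submodule.mem_sup.mp h4 with ⟨a, ha, b, hb, hab⟩
  exact ⟨a, b, ha, hb, hab⟩

lemma X_mul_X_mem_rel [IsDomain C] [IsPrincipalIdealRing C]
    (hup : ∀ P ∈ P₀ ∪ P₁, Ideal.IsPrime P) (hun : ∀ P ∈ P₀ ∪ P₁, P ≠ ⊥)
    {p q : ↥(P₀ ∪ P₁)} (hpq : p ≠ q) :
    MvPolynomial.X p * MvPolynomial.X q ∈ CPlusRel C P₀ P₁ := by
  obtain ⟨a, b, ha, hb, hab⟩ := coprime_aux hup hun hpq
  have key : MvPolynomial.X (R := C) p * MvPolynomial.X q =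
      (MvPolynomial.C a * MvPolynomial.X p) * MvPolynomial.X q
        + (MvPolynomial.C b * MvPolynomial.X q) * MvPolynomial.X p := by
    have h1 : (MvPolynomial.C (σ := ↥(P₀ ∪ P₁)) (a + b) : MvPolynomial _ C) = 1 := by
      rw [hab, MvPolynomial.C_1]
    calc MvPolynomial.X (R := C) p * MvPolynomial.X q
        = MvPolynomial.C (a + b) * (MvPolynomial.X p * MvPolynomial.X q) := by
          rw [h1, one_mul]
      _ = _ := by rw [map_add]; ring
  rw [key]
  exact Ideal.add_mem _ (Ideal.mul_mem_right _ _ (gen_mem_rel p ha))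
    (Ideal.mul_mem_right _ _ (gen_mem_rel q hb))

open Classical in
/-- Evaluation `k → (C/p)[t]` sending `y_p ↦ t` and `y_q ↦ 0` for `q ≠ p`. -/
noncomputable def eps (p : ↥(P₀ ∪ P₁)) :
    MvPolynomial (↥(P₀ ∪ P₁)) C →ₐ[C] Polynomial (C ⧸ (p : Ideal C)) :=
  MvPolynomial.aeval (fun q => if q = p then Polynomial.X else 0)

lemma eps_vanish (p : ↥(P₀ ∪ P₁)) {f : MvPolynomial (↥(P₀ ∪ P₁)) C}
    (hf : f ∈ CPlusRel C P₀ P₁) : eps p f = 0 := by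
  classical
  have hle : CPlusRel C P₀ P₁ ≤ RingHom.ker (eps (P₀ := P₀) (P₁ := P₁) p).toRingHom := by
    rw [CPlusRel, Ideal.span_le]
    rintro g ⟨q, c, hc, rfl⟩
    simp only [SetLike.mem_coe, RingHom.mem_ker, AlgHom.toRingHom_eq_coe, RingHom.coe_coe]
    rw [map_mul]
    rcases eq_or_ne q p with rfl | hq
    · have h1 : eps (P₀ := P₀) (P₁ := P₁) q (MvPolynomial.C c) = 0 := by
        rw [eps, MvPolynomial.aeval_C, Polynomial.algebraMap_apply,
          Ideal.Quotient.algebraMap_eq, Ideal.Quotient.eq_zero_iff_mem.mpr hc, map_zero]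
      rw [h1, zero_mul]
    · have h1 : eps (P₀ := P₀) (P₁ := P₁) p (MvPolynomial.X q) = 0 := by
        rw [eps, MvPolynomial.aeval_X, if_neg hq]
      rw [h1, mul_zero]
  exact hle hf

open Classical in
lemma eps_monomial (p : ↥(P₀ ∪ P₁)) (m : ↥(P₀ ∪ P₁) →₀ ℕ) (a : C) :
    eps p (MvPolynomial.monomial m a) =
      if m.support ⊆ {p} then
        Polynomial.C (Ideal.Quotient.mk (p : Ideal C) a) * Polynomial.X ^ (m p)
      else 0 := by
  rw [eps, MvPolynomial.aeval_monomial]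
  split_ifs with h
  · rw [Polynomial.algebraMap_apply, Ideal.Quotient.algebraMap_eq]
    congr 1
    have hm : m = Finsupp.single p (m p) := Finsupp.support_subset_singleton.mp h
    nth_rewrite 1 [hm]
    rw [Finsupp.prod_single_index (by rw [pow_zero])]
    rw [if_pos rfl]
  · obtain ⟨q, hq, hqp⟩ := Finset.not_subset.mp h
    rw [Finsupp.prod, Finset.prod_eq_zero hq, mul_zero]
    rw [if_neg (Finset.notMem_singleton.mp hqp), zero_pow (Finsupp.mem_support_iff.mp hq)]

open Classical in
lemma eps_coeff (p : ↥(P₀ ∪ P₁)) (f : MvPolynomial (↥(P₀ ∪ P₁)) C) (n : ℕ) :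
    (eps p f).coeff n
      = Ideal.Quotient.mk (p : Ideal C) (MvPolynomial.coeff (Finsupp.single p n) f) := by
  conv_lhs => rw [f.as_sum]
  rw [map_sum, Polynomial.finset_sum_coeff]
  have hterm : ∀ m ∈ f.support,
      (eps p (MvPolynomial.monomial m (MvPolynomial.coeff m f))).coeff n
        = if m = Finsupp.single p n then
            Ideal.Quotient.mk (p : Ideal C) (MvPolynomial.coeff m f) else 0 := by
    intro m _
    rw [eps_monomial]
    split_ifs with h1 h2 h2
    · rw [Polynomial.coeff_C_mul, Polynomial.coeff_X_pow]
      have hmp : m p = n := by rw [h2]; exact Finsupp.single_eq_same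
      rw [if_pos hmp.symm, mul_one]
    · rw [Polynomial.coeff_C_mul, Polynomial.coeff_X_pow, if_neg, mul_zero]
      intro hn
      exact h2 (by rw [Finsupp.support_subset_singleton.mp h1, hn])
    · exact absurd (by rw [h2]; exact Finsupp.support_single_subset) h1
    · simp
  rw [Finset.sum_congr rfl hterm, Finset.sum_ite_eq']
  split_ifs with h
  · rfl
  · rw [MvPolynomial.notMem_support_iff.mp h, map_zero]

lemma claimA [IsDomain C] [IsPrincipalIdealRing C]
    (hup : ∀ P ∈ P₀ ∪ P₁, Ideal.IsPrime P) (hun : ∀ P ∈ P₀ ∪ P₁, P ≠ ⊥)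
    (S T : Set (Ideal C))
    (hcover : ∀ p : ↥(P₀ ∪ P₁), (p : Ideal C) ∈ S ∨ (p : Ideal C) ∈ T)
    (f : MvPolynomial (↥(P₀ ∪ P₁)) C)
    (h0 : MvPolynomial.coeff 0 f = 0)
    (hS : ∀ p : ↥(P₀ ∪ P₁), (p : Ideal C) ∈ S → eps p f = 0) :
    f ∈ CPlusRel C P₀ P₁
      ⊔ Ideal.span {g | ∃ p : ↥(P₀ ∪ P₁), (p : Ideal C) ∈ T ∧ g = MvPolynomial.X p} := by
  nth_rewrite 1 [f.as_sum]
  apply Submodule.sum_mem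
  intro m hm
  by_cases hm0 : m = 0
  · subst hm0
    rw [h0, MvPolynomial.monomial_zero]
    exact zero_mem _
  · obtain ⟨p, hp⟩ := Finsupp.support_nonempty_iff.mpr hm0
    by_cases hsub : m.support ⊆ {p}
    · rcases hcover p with hpS | hpT
      · have h1 := eps_coeff p f (m p)
        rw [hS p hpS] at h1
        have h2 : MvPolynomial.coeff m f ∈ (p : Ideal C) := by
          rw [← Finsupp.support_subset_singleton.mp hsub, Polynomial.coeff_zero] at h1
          exact Ideal.Quotient.eq_zero_iff_mem.mp h1.symm
        apply Ideal.mem_sup_left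
        have h3 := monomial_mem_rel hp (1 : C) h2
        rwa [mul_one] at h3
      · apply Ideal.mem_sup_right
        rw [monomial_eq_mul_X hp]
        exact Ideal.mul_mem_left _ _ (Ideal.subset_span ⟨p, hpT, rfl⟩)
    · obtain ⟨q, hq, hqp⟩ := Finset.not_subset.mp hsub
      have hqp' : q ≠ p := Finset.notMem_singleton.mp hqp
      obtain ⟨a, b, ha, hb, hab⟩ := coprime_aux hup hun hqp'
      apply Ideal.mem_sup_left
      have hc : MvPolynomial.coeff m f
          = a * MvPolynomial.coeff m f + b * MvPolynomial.coeff m f := by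
        rw [← add_mul, hab, one_mul]
      rw [hc, map_add]
      exact Ideal.add_mem _ (monomial_mem_rel hq _ ha) (monomial_mem_rel hp _ hb)

lemma eq_zero_of_mem_infinite [IsDomain C] [IsPrincipalIdealRing C]
    {S : Set (Ideal C)} (hS : S.Infinite) (hprime : ∀ P ∈ S, P.IsPrime)
    (hne : ∀ P ∈ S, P ≠ ⊥) {c : C} (hc : ∀ P ∈ S, c ∈ P) : c = 0 := by
  by_contra hc0
  have hfin : {v : IsDedekindDomain.HeightOneSpectrum C |
      v.asIdeal ∣ Ideal.span {c}}.Finite :=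
    Ideal.finite_factors (by
      simpa only [Ideal.zero_eq_bot, ne_eq, Ideal.span_singleton_eq_bot] using hc0)
  apply hS
  have hsub : S ⊆ IsDedekindDomain.HeightOneSpectrum.asIdeal ''
      {v : IsDedekindDomain.HeightOneSpectrum C | v.asIdeal ∣ Ideal.span {c}} := by
    intro P hP
    exact ⟨⟨P, hprime P hP, hne P hP⟩,
      Ideal.dvd_iff_le.mpr ((Ideal.span_singleton_le_iff_mem P).mpr (hc P hP)), rfl⟩
  exact (hfin.image _).subset hsub

lemma ann_mem [IsDomain C] [IsPrincipalIdealRing C]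
    (hup : ∀ P ∈ P₀ ∪ P₁, Ideal.IsPrime P) (hun : ∀ P ∈ P₀ ∪ P₁, P ≠ ⊥)
    (S T : Set (Ideal C)) (hSsub : S ⊆ P₀ ∪ P₁) (hSinf : S.Infinite)
    (hcover : ∀ p : ↥(P₀ ∪ P₁), (p : Ideal C) ∈ S ∨ (p : Ideal C) ∈ T)
    (x : CPlus C P₀ P₁)
    (hx : ∀ p : ↥(P₀ ∪ P₁), (p : Ideal C) ∈ S →
      x * Ideal.Quotient.mk (CPlusRel C P₀ P₁) (MvPolynomial.X p) = 0) :
    x ∈ Ideal.span {y | ∃ p : ↥(P₀ ∪ P₁), (p : Ideal C) ∈ T ∧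
      y = Ideal.Quotient.mk (CPlusRel C P₀ P₁) (MvPolynomial.X p)} := by
  classical
  obtain ⟨f, rfl⟩ := Ideal.Quotient.mk_surjective x
  have hf : ∀ p : ↥(P₀ ∪ P₁), (p : Ideal C) ∈ S → eps p f = 0 := by
    intro p hp
    have h1 : f * MvPolynomial.X p ∈ CPlusRel C P₀ P₁ := by
      rw [← Ideal.Quotient.eq_zero_iff_mem, map_mul]
      exact hx p hp
    have h3 := eps_vanish p h1
    rw [map_mul] at h3
    have h4 : eps (P₀ := P₀) (P₁ := P₁) p (MvPolynomial.X p) = Polynomial.X := by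
      rw [eps, MvPolynomial.aeval_X, if_pos rfl]
    rw [h4] at h3
    ext n
    have := congrArg (fun g => Polynomial.coeff g (n + 1)) h3
    simpa only [Polynomial.coeff_mul_X, Polynomial.coeff_zero] using this
  have h0 : MvPolynomial.coeff 0 f = 0 := by
    apply eq_zero_of_mem_infinite hSinf (fun P hP => hup P (hSsub hP))
      (fun P hP => hun P (hSsub hP))
    intro P hP
    have hp := eps_coeff (⟨P, hSsub hP⟩ : ↥(P₀ ∪ P₁)) f 0
    rw [hf _ hP, Finsupp.single_zero, Polynomial.coeff_zero] at hp
    exact Ideal.Quotient.eq_zero_iff_mem.mp hp.symm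
  have hmem := claimA hup hun S T hcover f h0 hf
  rcases Submodule.mem_sup.mp hmem with ⟨g, hg, h, hh, rfl⟩
  rw [map_add, Ideal.Quotient.eq_zero_iff_mem.mpr hg, zero_add]
  have himg : (Ideal.Quotient.mk (CPlusRel C P₀ P₁)) ''
      {g | ∃ p : ↥(P₀ ∪ P₁), (p : Ideal C) ∈ T ∧ g = MvPolynomial.X p} ⊆
      {y | ∃ p : ↥(P₀ ∪ P₁), (p : Ideal C) ∈ T ∧
        y = Ideal.Quotient.mk (CPlusRel C P₀ P₁) (MvPolynomial.X p)} := by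
    rintro _ ⟨g', ⟨p, hp, rfl⟩, rfl⟩
    exact ⟨p, hp, rfl⟩
  have h2 : Ideal.Quotient.mk (CPlusRel C P₀ P₁) h ∈
      Ideal.span ((Ideal.Quotient.mk (CPlusRel C P₀ P₁)) ''
        {g | ∃ p : ↥(P₀ ∪ P₁), (p : Ideal C) ∈ T ∧ g = MvPolynomial.X p}) := by
    rw [← Ideal.map_span]
    exact Ideal.mem_map_of_mem _ hh
  exact Ideal.span_mono himg h2

end Aux

section Aux2

variable {C : Type*} [CommRing C] {P₀ P₁ : Set (Ideal C)}

lemma mem_span_X {f : MvPolynomial (↥(P₀ ∪ P₁)) C}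
    (h0 : MvPolynomial.constantCoeff f = 0) :
    f ∈ Ideal.span
      {g : MvPolynomial (↥(P₀ ∪ P₁)) C | ∃ p : ↥(P₀ ∪ P₁), g = MvPolynomial.X p} := by
  nth_rewrite 1 [f.as_sum]
  apply Submodule.sum_mem
  intro m hm
  by_cases hm0 : m = 0
  · subst hm0
    have : MvPolynomial.coeff 0 f = 0 := h0
    rw [this, MvPolynomial.monomial_zero]
    exact zero_mem _
  · obtain ⟨p, hp⟩ := Finsupp.support_nonempty_iff.mpr hm0
    rw [monomial_eq_mul_X hp]
    exact Ideal.mul_mem_left _ _ (Ideal.subset_span ⟨p, rfl⟩)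

/-- `k ⧸ (M ⊔ N) ≃+* C`. -/
noncomputable def quotSupEquiv (C : Type*) [CommRing C] (P₀ P₁ : Set (Ideal C)) :
    (CPlus C P₀ P₁ ⧸ (MIdeal C P₀ P₁ ⊔ NIdeal C P₀ P₁)) ≃+* C := by
  have hrel_le : CPlusRel C P₀ P₁ ≤
      Ideal.span {g : MvPolynomial (↥(P₀ ∪ P₁)) C | ∃ p : ↥(P₀ ∪ P₁), g = MvPolynomial.X p} := by
    rw [CPlusRel, Ideal.span_le]
    rintro g ⟨p, c, hc, rfl⟩
    exact Ideal.mul_mem_left _ _ (Ideal.subset_span ⟨p, rfl⟩)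
  have hsup : MIdeal C P₀ P₁ ⊔ NIdeal C P₀ P₁ =
      Ideal.map (Ideal.Quotient.mk (CPlusRel C P₀ P₁))
        (Ideal.span {g : MvPolynomial (↥(P₀ ∪ P₁)) C | ∃ p : ↥(P₀ ∪ P₁),
          g = MvPolynomial.X p}) := by
    rw [MIdeal, NIdeal, ← Ideal.span_union, Ideal.map_span]
    congr 1
    ext x
    constructor
    · rintro (⟨p, _, rfl⟩ | ⟨p, _, rfl⟩)
      · exact ⟨MvPolynomial.X p, ⟨p, rfl⟩, rfl⟩
      · exact ⟨MvPolynomial.X p, ⟨p, rfl⟩, rfl⟩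
    · rintro ⟨g, ⟨p, rfl⟩, rfl⟩
      rcases p.2 with h | h
      · exact Or.inl ⟨p, h, rfl⟩
      · exact Or.inr ⟨p, h, rfl⟩
  refine ((Ideal.quotEquivOfEq hsup).trans (DoubleQuot.quotQuotEquivQuotOfLE hrel_le)).trans ?_
  refine RingEquiv.ofRingHom
    (Ideal.Quotient.lift _ (MvPolynomial.constantCoeff) ?_)
    ((Ideal.Quotient.mk _).comp (MvPolynomial.C :
      C →+* MvPolynomial (↥(P₀ ∪ P₁)) C)) ?_ ?_
  pick_goal 3
  swap
  · intro g hg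
    have hle : Ideal.span {g : MvPolynomial (↥(P₀ ∪ P₁)) C | ∃ p : ↥(P₀ ∪ P₁),
        g = MvPolynomial.X p} ≤ RingHom.ker (MvPolynomial.constantCoeff :
          MvPolynomial (↥(P₀ ∪ P₁)) C →+* C) := by
      rw [Ideal.span_le]
      rintro g ⟨p, rfl⟩
      simp [RingHom.mem_ker]
    exact hle hg
  · apply RingHom.ext
    intro z
    obtain ⟨f, rfl⟩ := Ideal.Quotient.mk_surjective z
    simp only [RingHom.coe_comp, RingHom.coe_coe, Function.comp_apply, RingHom.id_apply,
      Ideal.Quotient.lift_mk]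
    rw [Ideal.Quotient.mk_eq_mk_iff_sub_mem]
    apply mem_span_X
    rw [map_sub, MvPolynomial.constantCoeff_C]
    exact sub_self _
  · apply RingHom.ext
    intro c
    simp only [RingHom.coe_comp, RingHom.coe_coe, Function.comp_apply, RingHom.id_apply,
      Ideal.Quotient.lift_mk]
    exact MvPolynomial.constantCoeff_C _ c

end Aux2

lemma my_tmul_smul {R M N : Type*} [CommSemiring R] [AddCommMonoid M] [Module R M]
    [AddCommMonoid N] [Module R N] (r : R) (m : M) (n : N) :
    m ⊗ₜ[R] (r • n) = r • (m ⊗ₜ[R] n) := by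
  rw [← TensorProduct.smul_tmul, TensorProduct.smul_tmul']

lemma my_smul_tmul {R M N : Type*} [CommSemiring R] [AddCommMonoid M] [Module R M]
    [AddCommMonoid N] [Module R N] (r : R) (m : M) (n : N) :
    (r • m) ⊗ₜ[R] n = r • (m ⊗ₜ[R] n) := by
  rw [TensorProduct.smul_tmul']

set_option maxHeartbeats 1000000 in
set_option synthInstance.maxHeartbeats 1000000 in
/-- **Counterexample (ii).**  Let `C` be a commutative principal ideal domain with
infinitely many nonzero prime ideals, `P₀`, `P₁` two disjoint infinite sets of nonzero
prime ideals of `C`, `k = C⁺`, `M` the ideal of `k` generated by the `y_p` (`p ∈ P₀`),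
`N` the ideal of `k` generated by the `y_p` (`p ∈ P₁`), `A = k/N` and `B = k/M`.  Then:
`M·N = 0` (so `M` is an `A`-module and `N` a `B`-module); `M` is faithful over `A`
(anything in `k` annihilating `M` lies in `N`); `N` is faithful over `B`;
`A ⊗[k] B ≅ k/(M + N) ≅ C` is nonzero; but `M ⊗[k] N = 0`, hence no `k`-linear
action of `A ⊗[k] B` on `M ⊗[k] N` can be injective, i.e. `M ⊗[k] N` is not a
faithful `(A ⊗[k] B)`-module. -/
theorem counterexample_CPlus_ideals
    (C : Type*) [CommRing C] [IsDomain C] [IsPrincipalIdealRing C]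
    (P₀ P₁ : Set (Ideal C)) (h₀ : P₀.Infinite) (h₁ : P₁.Infinite) (hd : Disjoint P₀ P₁)
    (hprime₀ : ∀ p ∈ P₀, p.IsPrime) (hne₀ : ∀ p ∈ P₀, p ≠ ⊥)
    (hprime₁ : ∀ p ∈ P₁, p.IsPrime) (hne₁ : ∀ p ∈ P₁, p ≠ ⊥) :
    MIdeal C P₀ P₁ * NIdeal C P₀ P₁ = ⊥ ∧
    (∀ x : CPlus C P₀ P₁, (∀ m ∈ MIdeal C P₀ P₁, x * m = 0) → x ∈ NIdeal C P₀ P₁) ∧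
    (∀ x : CPlus C P₀ P₁, (∀ n ∈ NIdeal C P₀ P₁, x * n = 0) → x ∈ MIdeal C P₀ P₁) ∧
    Nonempty
      (@RingEquiv ((CPlus C P₀ P₁ ⧸ NIdeal C P₀ P₁) ⊗[CPlus C P₀ P₁] (CPlus C P₀ P₁ ⧸ MIdeal C P₀ P₁))
        (CPlus C P₀ P₁ ⧸ (MIdeal C P₀ P₁ ⊔ NIdeal C P₀ P₁))
        (Algebra.TensorProduct.instMul (R := CPlus C P₀ P₁) (A := CPlus C P₀ P₁ ⧸ NIdeal C P₀ P₁)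
          (B := CPlus C P₀ P₁ ⧸ MIdeal C P₀ P₁)) _ _ _) ∧
    Nonempty ((CPlus C P₀ P₁ ⧸ (MIdeal C P₀ P₁ ⊔ NIdeal C P₀ P₁)) ≃+* C) ∧
    Nontrivial
      ((CPlus C P₀ P₁ ⧸ NIdeal C P₀ P₁) ⊗[CPlus C P₀ P₁] (CPlus C P₀ P₁ ⧸ MIdeal C P₀ P₁)) ∧
    Subsingleton ((↥(MIdeal C P₀ P₁)) ⊗[CPlus C P₀ P₁] (↥(NIdeal C P₀ P₁))) ∧
    (∀ φ : ((CPlus C P₀ P₁ ⧸ NIdeal C P₀ P₁) ⊗[CPlus C P₀ P₁]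
          (CPlus C P₀ P₁ ⧸ MIdeal C P₀ P₁)) →ₗ[CPlus C P₀ P₁]
        Module.End (CPlus C P₀ P₁)
          ((↥(MIdeal C P₀ P₁)) ⊗[CPlus C P₀ P₁] (↥(NIdeal C P₀ P₁))),
      ¬ Function.Injective φ) := by
  have hup : ∀ P ∈ P₀ ∪ P₁, Ideal.IsPrime P := by
    rintro P (h | h)
    · exact hprime₀ P h
    · exact hprime₁ P h
  have hun : ∀ P ∈ P₀ ∪ P₁, P ≠ ⊥ := by
    rintro P (h | h)
    · exact hne₀ P h
    · exact hne₁ P h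
  -- (1) M · N = 0
  have h1 : MIdeal C P₀ P₁ * NIdeal C P₀ P₁ = ⊥ := by
    rw [MIdeal, NIdeal, Ideal.span_mul_span', Ideal.span_eq_bot]
    rintro x hx
    rw [Set.mem_mul] at hx
    obtain ⟨a, ha, b, hb, rfl⟩ := hx
    obtain ⟨p, hp, rfl⟩ := ha
    obtain ⟨q, hq, rfl⟩ := hb
    rw [← map_mul, Ideal.Quotient.eq_zero_iff_mem]
    exact X_mul_X_mem_rel hup hun (fun h => Set.disjoint_left.mp hd (h ▸ hp) hq)
  -- (2) faithfulness of M over A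
  have h2 : ∀ x : CPlus C P₀ P₁, (∀ m ∈ MIdeal C P₀ P₁, x * m = 0) → x ∈ NIdeal C P₀ P₁ := by
    intro x hxm
    rw [NIdeal]
    exact ann_mem hup hun P₀ P₁ Set.subset_union_left h₀ (fun p => p.2) x
      (fun p hp => hxm _ (Ideal.subset_span ⟨p, hp, rfl⟩))
  have h3 : ∀ x : CPlus C P₀ P₁, (∀ n ∈ NIdeal C P₀ P₁, x * n = 0) → x ∈ MIdeal C P₀ P₁ := by
    intro x hxn
    rw [MIdeal]
    exact ann_mem hup hun P₁ P₀ Set.subset_union_right h₁ (fun p => p.2.symm) x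
      (fun p hp => hxn _ (Ideal.subset_span ⟨p, hp, rfl⟩))
  -- (4) A ⊗ B ≃ k ⧸ (M ⊔ N)
  letI : Mul ((CPlus C P₀ P₁ ⧸ NIdeal C P₀ P₁) ⊗[CPlus C P₀ P₁] (CPlus C P₀ P₁ ⧸ MIdeal C P₀ P₁)) :=
    Algebra.TensorProduct.instMul (R := CPlus C P₀ P₁) (A := CPlus C P₀ P₁ ⧸ NIdeal C P₀ P₁)
      (B := CPlus C P₀ P₁ ⧸ MIdeal C P₀ P₁)
  have e4 : @RingEquiv ((CPlus C P₀ P₁ ⧸ NIdeal C P₀ P₁) ⊗[CPlus C P₀ P₁] (CPlus C P₀ P₁ ⧸ MIdeal C P₀ P₁))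
        (CPlus C P₀ P₁ ⧸ (MIdeal C P₀ P₁ ⊔ NIdeal C P₀ P₁))
        (Algebra.TensorProduct.instMul (R := CPlus C P₀ P₁) (A := CPlus C P₀ P₁ ⧸ NIdeal C P₀ P₁)
          (B := CPlus C P₀ P₁ ⧸ MIdeal C P₀ P₁)) _ _ _ :=
    (quotTensorQuotRingEquiv (CPlus C P₀ P₁) (NIdeal C P₀ P₁) (MIdeal C P₀ P₁)).trans
      (Ideal.quotEquivOfEq (sup_comm _ _))
  -- (5)
  have e5 := quotSupEquiv C P₀ P₁
  -- (6)
  have h6 : Nontrivial ((CPlus C P₀ P₁ ⧸ NIdeal C P₀ P₁) ⊗[CPlus C P₀ P₁]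
      (CPlus C P₀ P₁ ⧸ MIdeal C P₀ P₁)) :=
    (e4.trans e5).toEquiv.nontrivial
  -- (7)
  have key : ∀ x (hx : x ∈ MIdeal C P₀ P₁) y (hy : y ∈ NIdeal C P₀ P₁),
      ((⟨x, hx⟩ : MIdeal C P₀ P₁) ⊗ₜ[CPlus C P₀ P₁] (⟨y, hy⟩ : NIdeal C P₀ P₁)) = 0 := by
    intro x hx
    induction hx using Submodule.span_induction with
    | mem x hxs =>
      obtain ⟨p, hp, rfl⟩ := hxs
      intro y hy
      induction hy using Submodule.span_induction with
      | mem y hys =>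
        obtain ⟨q, hq, rfl⟩ := hys
        have hpq : p ≠ q := fun h => Set.disjoint_left.mp hd (h ▸ hp) hq
        obtain ⟨a, b, ha, hb, hab⟩ := coprime_aux hup hun hpq
        set α : CPlus C P₀ P₁ := Ideal.Quotient.mk _ (MvPolynomial.C a) with hα
        set β : CPlus C P₀ P₁ := Ideal.Quotient.mk _ (MvPolynomial.C b) with hβ
        set u : ↥(MIdeal C P₀ P₁) := ⟨_, Ideal.subset_span ⟨p, hp, rfl⟩⟩ with hu0
        set v : ↥(NIdeal C P₀ P₁) := ⟨_, Ideal.subset_span ⟨q, hq, rfl⟩⟩ with hv0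
        have hαβ : α + β = 1 := by
          rw [hα, hβ, ← map_add, ← map_add, hab, map_one, map_one]
        have hu : α • u = 0 := by
          rw [← Submodule.coe_eq_zero]
          show α * Ideal.Quotient.mk (CPlusRel C P₀ P₁) (MvPolynomial.X p) = 0
          rw [hα, ← map_mul, Ideal.Quotient.eq_zero_iff_mem]
          exact gen_mem_rel p ha
        have hv : β • v = 0 := by
          rw [← Submodule.coe_eq_zero]
          show β * Ideal.Quotient.mk (CPlusRel C P₀ P₁) (MvPolynomial.X q) = 0
          rw [hβ, ← map_mul, Ideal.Quotient.eq_zero_iff_mem]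
          exact gen_mem_rel q hb
        have : (u ⊗ₜ[CPlus C P₀ P₁] v) = (α + β) • (u ⊗ₜ[CPlus C P₀ P₁] v) := by
          rw [hαβ, one_smul]
        rw [show ((⟨_, _⟩ : MIdeal C P₀ P₁) ⊗ₜ[CPlus C P₀ P₁] (⟨_, _⟩ : NIdeal C P₀ P₁)) =
          u ⊗ₜ[CPlus C P₀ P₁] v from rfl]
        rw [this, add_smul, TensorProduct.smul_tmul', hu, ← TensorProduct.tmul_smul, hv,
          TensorProduct.zero_tmul, TensorProduct.tmul_zero, add_zero]
      | zero =>
        have : (⟨0, (NIdeal C P₀ P₁).zero_mem⟩ : NIdeal C P₀ P₁) = 0 := rfl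
        rw [this, TensorProduct.tmul_zero]
      | add y z hy hz ihy ihz =>
        have : (⟨y + z, _⟩ : NIdeal C P₀ P₁)
            = (⟨y, hy⟩ : NIdeal C P₀ P₁) + (⟨z, hz⟩ : NIdeal C P₀ P₁) := rfl
        rw [this, TensorProduct.tmul_add, ihy, ihz, add_zero]
      | smul c y hy ihy =>
        have : (⟨c • y, _⟩ : NIdeal C P₀ P₁) = c • (⟨y, hy⟩ : NIdeal C P₀ P₁) := rfl
        rw [this, my_tmul_smul, ihy, smul_zero]
    | zero =>
      intro y hy
      have : (⟨0, (MIdeal C P₀ P₁).zero_mem⟩ : MIdeal C P₀ P₁) = 0 := rfl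
      rw [this, TensorProduct.zero_tmul]
    | add x z hx hz ihx ihz =>
      intro y hy
      have : (⟨x + z, _⟩ : MIdeal C P₀ P₁)
          = (⟨x, hx⟩ : MIdeal C P₀ P₁) + (⟨z, hz⟩ : MIdeal C P₀ P₁) := rfl
      rw [this, TensorProduct.add_tmul, ihx y hy, ihz y hy, add_zero]
    | smul c x hx ihx =>
      intro y hy
      have : (⟨c • x, _⟩ : MIdeal C P₀ P₁) = c • (⟨x, hx⟩ : MIdeal C P₀ P₁) := rfl
      rw [this, my_smul_tmul, ihx y hy, smul_zero]
  have h7 : Subsingleton ((↥(MIdeal C P₀ P₁)) ⊗[CPlus C P₀ P₁] (↥(NIdeal C P₀ P₁))) := by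
    apply subsingleton_of_forall_eq 0
    intro z
    induction z using TensorProduct.induction_on with
    | zero => rfl
    | tmul m n =>
      obtain ⟨x, hx⟩ := m
      obtain ⟨y, hy⟩ := n
      exact key x hx y hy
    | add x y hx hy => rw [hx, hy, add_zero]
  refine ⟨h1, h2, h3, ⟨e4⟩, ⟨e5⟩, h6, h7, ?_⟩
  intro φ hφ
  haveI := h7
  haveI := h6
  obtain ⟨a, b, hab⟩ := exists_pair_ne ((CPlus C P₀ P₁ ⧸ NIdeal C P₀ P₁) ⊗[CPlus C P₀ P₁]
    (CPlus C P₀ P₁ ⧸ MIdeal C P₀ P₁))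
  exact hab (hφ (Subsingleton.elim _ _))
end

section
/- Let C be a commutative principal ideal domain having two non-associate prime elements p_0 and p_1. Let M = ⊕_{n ≥ 1} C/(p_0^n) and N = ⊕_{n ≥ 1} C/(p_1^n). Then M and N are faithful C-modules, but M ⊗_C N = 0. -/
open DirectSum TensorProduct

private lemma faithful_aux_s8
    (C : Type*) [CommRing C] [IsDomain C] [IsPrincipalIdealRing C]
    (p : C) (hp : Prime p) :
    FaithfulSMul C (⨁ n : ℕ, C ⧸ Ideal.span {p ^ (n + 1)}) := by
  constructor
  intro c d h
  by_contra hcd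
  have hc : c - d ≠ 0 := sub_ne_zero.mpr hcd
  obtain ⟨n, hn⟩ := FiniteMultiplicity.of_prime_left hp hc
  apply hn
  have hx := h (DirectSum.of (fun n : ℕ => C ⧸ Ideal.span {p ^ (n + 1)}) n
    (Ideal.Quotient.mk _ 1))
  have hx0 : (c - d) • (DirectSum.of (fun n : ℕ => C ⧸ Ideal.span {p ^ (n + 1)}) n
      (Ideal.Quotient.mk _ 1)) = 0 := by
    exact (sub_smul (M := ⨁ n : ℕ, C ⧸ Ideal.span {p ^ (n + 1)}) c d _).trans
      (by rw [hx, sub_self])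
  have hcomp := DFunLike.congr_fun hx0 n
  rw [DFinsupp.smul_apply, DirectSum.of_eq_same, DirectSum.zero_apply] at hcomp
  rw [Algebra.smul_def, Ideal.Quotient.algebraMap_eq, ← map_mul, mul_one] at hcomp
  rwa [Ideal.Quotient.eq_zero_iff_mem, Ideal.mem_span_singleton] at hcomp

private lemma torsion_aux
    (C : Type*) [CommRing C] (p : C)
    (x : ⨁ n : ℕ, C ⧸ Ideal.span {p ^ (n + 1)}) :
    ∃ k : ℕ, p ^ k • x = 0 := by
  induction x using DirectSum.induction_on with
  | zero => exact ⟨0, smul_zero _⟩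
  | of n y =>
    refine ⟨n + 1, ?_⟩
    obtain ⟨c, rfl⟩ := Ideal.Quotient.mk_surjective y
    have h0 : p ^ (n + 1) • (Ideal.Quotient.mk (Ideal.span {p ^ (n + 1)}) c) = 0 := by
      rw [Algebra.smul_def, Ideal.Quotient.algebraMap_eq, ← map_mul,
        Ideal.Quotient.eq_zero_iff_mem, Ideal.mem_span_singleton]
      exact dvd_mul_right _ _
    rw [← DirectSum.of_smul, h0, map_zero]
  | add x y hx hy =>
    obtain ⟨k₁, h₁⟩ := hx
    obtain ⟨k₂, h₂⟩ := hy
    refine ⟨k₁ + k₂, ?_⟩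
    have e₁ : p ^ (k₁ + k₂) • x = 0 := by
      rw [add_comm, pow_add, mul_smul, h₁, smul_zero]
    have e₂ : p ^ (k₁ + k₂) • y = 0 := by
      rw [pow_add, mul_smul, h₂, smul_zero]
    rw [smul_add, e₁, e₂, add_zero]

/-- Let `C` be a commutative principal ideal domain having two non-associate prime
elements `p₀` and `p₁` (i.e. generating distinct prime ideals).  Then
`M = ⨁_{n ≥ 1} C/(p₀ⁿ)` and `N = ⨁_{n ≥ 1} C/(p₁ⁿ)` are faithful `C`-modules,
but `M ⊗[C] N = 0`. -/
theorem counterexample_prime_powers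
    (C : Type*) [CommRing C] [IsDomain C] [IsPrincipalIdealRing C]
    (p₀ p₁ : C) (hp₀ : Prime p₀) (hp₁ : Prime p₁)
    (hne : Ideal.span {p₀} ≠ Ideal.span {p₁}) :
    FaithfulSMul C (⨁ n : ℕ, C ⧸ Ideal.span {p₀ ^ (n + 1)}) ∧
    FaithfulSMul C (⨁ n : ℕ, C ⧸ Ideal.span {p₁ ^ (n + 1)}) ∧
    Subsingleton ((⨁ n : ℕ, C ⧸ Ideal.span {p₀ ^ (n + 1)}) ⊗[C]
      (⨁ n : ℕ, C ⧸ Ideal.span {p₁ ^ (n + 1)})) := by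
  refine ⟨faithful_aux_s8 C p₀ hp₀, faithful_aux_s8 C p₁ hp₁, ?_⟩
  have hdvd : ¬ p₀ ∣ p₁ := by
    intro h
    exact hne (Ideal.span_singleton_eq_span_singleton.mpr
      (hp₀.irreducible.associated_of_dvd hp₁.irreducible h))
  have hcop : IsCoprime p₀ p₁ := hp₀.coprime_iff_not_dvd.mpr hdvd
  have key : ∀ x : (⨁ n : ℕ, C ⧸ Ideal.span {p₀ ^ (n + 1)}) ⊗[C]
      (⨁ n : ℕ, C ⧸ Ideal.span {p₁ ^ (n + 1)}), x = 0 := by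
    intro x
    induction x using TensorProduct.induction_on with
    | zero => rfl
    | tmul m n =>
      obtain ⟨k₁, hm⟩ := torsion_aux C p₀ m
      obtain ⟨k₂, hn⟩ := torsion_aux C p₁ n
      obtain ⟨a, b, hab⟩ := hcop.pow (m := k₁) (n := k₂)
      have h1 : p₀ ^ k₁ • (m ⊗ₜ[C] n) = 0 := by
        rw [smul_tmul', hm, zero_tmul]
      have h2 : p₁ ^ k₂ • (m ⊗ₜ[C] n) = 0 := by
        rw [← tmul_smul, hn, tmul_zero]
      calc m ⊗ₜ[C] n = (a * p₀ ^ k₁ + b * p₁ ^ k₂) • (m ⊗ₜ[C] n) := by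
            rw [hab, one_smul]
        _ = a • (p₀ ^ k₁ • (m ⊗ₜ[C] n)) + b • (p₁ ^ k₂ • (m ⊗ₜ[C] n)) := by
            rw [add_smul, mul_smul, mul_smul]
        _ = 0 := by rw [h1, h2, smul_zero, smul_zero, add_zero]
    | add x y hx hy => rw [hx, hy, add_zero]
  exact subsingleton_of_forall_eq 0 fun y => key y
end

section
/- Let k be a commutative ring. Suppose given k-modules A, M_0, M_1, B, N_0, N_1, an injective k-linear map α: A → Hom_k(M_0, M_1) and an injective k-linear map β: B → Hom_k(N_0, N_1). Suppose moreover that elements of M_1 can be separated by k-module homomorphisms M_1 → k (for every nonzero u ∈ M_1 there is a k-linear φ: M_1 → k with φ(u) ≠ 0), and that every finite subset of B is contained in a free k-submodule of B. Then the induced k-linear map A ⊗_k B → Hom_k(M_0 ⊗_k N_0, M_1 ⊗_k N_1), under which Σ_i a_i ⊗ b_i sends u ⊗ v to Σ_i α(a_i)(u) ⊗ β(b_i)(v), is injective. -/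
open TensorProduct

/-- **Corollary (faithful actions, commutative base ring).**
Let `k` be a commutative ring, and suppose given faithful actions (injective `k`-linear
maps) `α : A →ₗ[k] Hom_k(M₀, M₁)` and `β : B →ₗ[k] Hom_k(N₀, N₁)`.  Suppose moreover that
elements of `M₁` are separated by `k`-module homomorphisms `M₁ → k`, and that every finite
subset of `B` is contained in a free `k`-submodule of `B`.  Then the induced action
`(homTensorHomMap k M₀ N₀ M₁ N₁) ∘ₗ (map α β)` of `A ⊗[k] B` on
`(M₀ ⊗[k] N₀, M₁ ⊗[k] N₁)` is injective. -/
theorem faithful_action_tensor_of_commRing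
    (k : Type*) [CommRing k] (A B M₀ M₁ N₀ N₁ : Type*)
    [AddCommGroup A] [Module k A] [AddCommGroup B] [Module k B]
    [AddCommGroup M₀] [Module k M₀] [AddCommGroup M₁] [Module k M₁]
    [AddCommGroup N₀] [Module k N₀] [AddCommGroup N₁] [Module k N₁]
    (α : A →ₗ[k] (M₀ →ₗ[k] M₁)) (β : B →ₗ[k] (N₀ →ₗ[k] N₁))
    (hα : Function.Injective α) (hβ : Function.Injective β)
    (hsep : ∀ u : M₁, u ≠ 0 → ∃ φ : M₁ →ₗ[k] k, φ u ≠ 0)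
    (hfree : ∀ s : Finset B, ∃ S : Submodule k B, (s : Set B) ⊆ S ∧ Module.Free k S) :
    Function.Injective
      ((TensorProduct.homTensorHomMap (RingHom.id k) M₀ N₀ M₁ N₁).comp (TensorProduct.map α β)) := by
  classical
  set f := (TensorProduct.homTensorHomMap (RingHom.id k) M₀ N₀ M₁ N₁).comp (TensorProduct.map α β) with hf
  -- auxiliary maps
  let T : (M₁ →ₗ[k] k) → M₀ → (A ⊗[k] B →ₗ[k] B) := fun φ u =>
    TensorProduct.lift ((LinearMap.lsmul k B).comp (φ.comp (α.flip u)))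
  let ψ : (M₁ →ₗ[k] k) → (M₁ ⊗[k] N₁ →ₗ[k] N₁) := fun φ =>
    TensorProduct.lift ((LinearMap.lsmul k N₁).comp φ)
  have hT : ∀ (x : A ⊗[k] B) (φ : M₁ →ₗ[k] k) (u : M₀) (v : N₀),
      β (T φ u x) v = ψ φ (f x (u ⊗ₜ[k] v)) := by
    intro x φ u v
    induction x using TensorProduct.induction_on with
    | zero => simp
    | tmul a b => simp [T, ψ, f]
    | add x y hx hy => simp [map_add, hx, hy]
  rw [injective_iff_map_eq_zero]
  intro x hx
  have hT0 : ∀ (φ : M₁ →ₗ[k] k) (u : M₀), T φ u x = 0 := by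
    intro φ u
    apply hβ
    rw [map_zero]
    ext v
    rw [hT x φ u v, hx]
    simp
  obtain ⟨t, rfl⟩ := TensorProduct.exists_finset x
  obtain ⟨S, hSt, hF⟩ := hfree (t.image Prod.snd)
  haveI := hF
  -- lift x to A ⊗ S
  set y : A ⊗[k] S := ∑ p ∈ t.attach,
    p.1.1 ⊗ₜ[k] (⟨p.1.2, hSt (Finset.mem_coe.mpr (Finset.mem_image_of_mem Prod.snd p.2))⟩ : S)
    with hy
  have hxy : (S.subtype.lTensor A) y = ∑ p ∈ t, p.1 ⊗ₜ[k] p.2 := by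
    rw [hy, map_sum]
    simp only [LinearMap.lTensor_tmul, Submodule.coe_subtype]
    exact Finset.sum_attach t fun p => p.1 ⊗ₜ[k] p.2
  suffices hy0 : y = 0 by
    rw [← hxy, hy0, map_zero]
  -- expand y in a basis of S
  let ι := Module.Free.ChooseBasisIndex k S
  let b : Module.Basis ι k S := Module.Free.chooseBasis k S
  let g : (A ⊗[k] S) ≃ₗ[k] (ι →₀ A) :=
    (LinearEquiv.lTensor A b.repr).trans (TensorProduct.finsuppScalarRight k k A ι)
  set c : ι →₀ A := g y with hc
  have hsingle : ∀ (i : ι) (a : A), g.symm (Finsupp.single i a) = a ⊗ₜ[k] (b i) := by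
    intro i a
    simp [g, LinearEquiv.lTensor]
  have hyc : y = c.sum fun i a => a ⊗ₜ[k] (b i) := by
    have h1 : g.symm (c.sum fun i a => Finsupp.single i a) = y := by
      rw [Finsupp.sum_single]; exact g.symm_apply_apply y
    rw [← h1, map_finsuppSum]
    exact Finsupp.sum_congr fun i _ => hsingle i (c i)
  have li : LinearIndependent k (fun i : ι => ((b i : S) : B)) :=
    b.linearIndependent.map' S.subtype (Submodule.ker_subtype S)
  have hcoeff : ∀ (i : ι) (φ : M₁ →ₗ[k] k) (u : M₀), φ (α (c i) u) = 0 := by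
    intro i φ u
    have h0 := hT0 φ u
    rw [← hxy, hyc, map_finsuppSum, map_finsuppSum] at h0
    simp only [LinearMap.lTensor_tmul, Submodule.coe_subtype] at h0
    have h1 : (c.sum fun j a => φ (α a u) • ((b j : S) : B)) = 0 := by
      rw [← h0]
      refine Finsupp.sum_congr fun j _ => ?_
      simp [T]
    set d : ι →₀ k := c.mapRange (fun a => φ (α a u)) (by simp) with hd
    have h2 : Finsupp.linearCombination k (fun j : ι => ((b j : S) : B)) d = 0 := by
      rw [Finsupp.linearCombination_apply, hd, Finsupp.sum_mapRange_index (by simp)]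
      exact h1
    have h3 : d = 0 := linearIndependent_iff.mp li d h2
    have h4 : d i = 0 := by rw [h3]; rfl
    rwa [hd, Finsupp.mapRange_apply] at h4
  have hc0 : c = 0 := by
    ext i
    have : α (c i) = 0 := by
      ext u
      by_contra h'
      obtain ⟨φ, hφ⟩ := hsep (α (c i) u) h'
      exact hφ (hcoeff i φ u)
    have := hα (by rw [this, map_zero] : α (c i) = α 0)
    simpa using this
  have : g y = g 0 := by rw [← hc, hc0, map_zero]
  exact g.injective this
end

section
/- Let k be a field, M and N k-vector spaces, and X and Y arbitrary sets. Then the natural k-linear map M^X ⊗_k N^Y → (M ⊗_k N)^{X×Y}, sending (u_x)_{x∈X} ⊗ (v_y)_{y∈Y} to the family (u_x ⊗ v_y)_{(x,y)∈X×Y}, is injective. -/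
open TensorProduct

lemma piRightHom_injective_of_field (k M : Type*) [Field k] [AddCommGroup M] [Module k M]
    {ι : Type*} (P : ι → Type*) [∀ i, AddCommGroup (P i)] [∀ i, Module k (P i)] :
    Function.Injective (TensorProduct.piRightHom k k M P) := by
  rw [← LinearMap.ker_eq_bot, LinearMap.ker_eq_bot']
  intro t ht
  classical
  let b := Module.Basis.ofVectorSpace k M
  let E : M ⊗[k] (∀ i, P i) ≃ₗ[k] (_ →₀ (∀ i, P i)) :=
    (TensorProduct.congr b.repr (LinearEquiv.refl k _)).trans
      (TensorProduct.finsuppScalarLeft k (∀ i, P i) _)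
  let F : ∀ i, M ⊗[k] P i ≃ₗ[k] (_ →₀ P i) := fun i =>
    (TensorProduct.congr b.repr (LinearEquiv.refl k _)).trans
      (TensorProduct.finsuppScalarLeft k (P i) _)
  have key : ∀ (t : M ⊗[k] (∀ i, P i)) (j : Module.Basis.ofVectorSpaceIndex k M) (i : ι),
      E t j i = F i (TensorProduct.piRightHom k k M P t i) j := by
    intro t j i
    induction t using TensorProduct.induction_on with
    | zero => simp
    | tmul m f => simp [E, F, finsuppScalarLeft_apply_tmul_apply]
    | add a c ha hc => simp [map_add, ha, hc]
  have hE : E t = 0 := by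
    ext j i
    rw [key t j i, ht]
    simp
  exact E.map_eq_zero_iff.mp hE

/-- The natural `k`-linear map `M^X ⊗[k] N^Y → (M ⊗[k] N)^(X × Y)`, determined on
decomposable tensors by sending `(u_x)_{x ∈ X} ⊗ (v_y)_{y ∈ Y}` to the family
`((x, y) ↦ u_x ⊗ v_y)`. -/
noncomputable def powTensorPow (k M N X Y : Type*) [CommRing k]
    [AddCommGroup M] [Module k M] [AddCommGroup N] [Module k N] :
    ((X → M) ⊗[k] (Y → N)) →ₗ[k] (X × Y → M ⊗[k] N) :=
  TensorProduct.lift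
    (LinearMap.mk₂ k (fun u v xy => u xy.1 ⊗ₜ[k] v xy.2)
      (fun u u' v => by funext xy; simp [TensorProduct.add_tmul])
      (fun c u v => by funext xy; simp [TensorProduct.smul_tmul'])
      (fun u v v' => by funext xy; simp [TensorProduct.tmul_add])
      (fun c u v => by funext xy; simp [TensorProduct.tmul_smul]))

/-- Let `k` be a field, `M` and `N` `k`-vector spaces, and `X`, `Y` arbitrary sets.
Then the natural `k`-linear map `M^X ⊗[k] N^Y → (M ⊗[k] N)^(X × Y)` is injective. -/
theorem powTensorPow_injective
    (k M N X Y : Type*) [Field k]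
    [AddCommGroup M] [Module k M] [AddCommGroup N] [Module k N] :
    Function.Injective (powTensorPow k M N X Y) := by
  rw [← LinearMap.ker_eq_bot, LinearMap.ker_eq_bot']
  intro t ht
  have key : ∀ (t : (X → M) ⊗[k] (Y → N)) (x : X) (y : Y),
      TensorProduct.piRightHom k k M (fun _ : Y => N)
        ((TensorProduct.comm k (Y → N) M)
          ((TensorProduct.piRightHom k k (Y → N) (fun _ : X => M)
            ((TensorProduct.comm k (X → M) (Y → N)) t)) x)) y
      = powTensorPow k M N X Y t (x, y) := by
    intro t x y
    induction t using TensorProduct.induction_on with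
    | zero => simp only [LinearEquiv.map_zero, LinearMap.map_zero, Pi.zero_apply]
    | tmul u v => simp [powTensorPow]
    | add a c ha hc =>
        simp only [map_add, Pi.add_apply] at ha hc ⊢
        rw [ha, hc]
  have h2 : ∀ x, (TensorProduct.piRightHom k k (Y → N) (fun _ : X => M)
      ((TensorProduct.comm k (X → M) (Y → N)) t)) x = 0 := by
    intro x
    have h1 : (TensorProduct.piRightHom k k M (fun _ : Y => N))
        ((TensorProduct.comm k (Y → N) M)
          ((TensorProduct.piRightHom k k (Y → N) (fun _ : X => M)
            ((TensorProduct.comm k (X → M) (Y → N)) t)) x)) = 0 := by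
      funext y
      rw [key t x y, ht]
      rfl
    have h0 : (TensorProduct.comm k (Y → N) M)
        ((TensorProduct.piRightHom k k (Y → N) (fun _ : X => M)
          ((TensorProduct.comm k (X → M) (Y → N)) t)) x) = 0 :=
      piRightHom_injective_of_field k M (fun _ : Y => N) (by rw [map_zero]; exact h1)
    exact (TensorProduct.comm k (Y → N) M).map_eq_zero_iff.mp h0
  have h3 : (TensorProduct.piRightHom k k (Y → N) (fun _ : X => M))
      ((TensorProduct.comm k (X → M) (Y → N)) t) = 0 := funext h2
  have h4 : (TensorProduct.comm k (X → M) (Y → N)) t = 0 :=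
    piRightHom_injective_of_field k (Y → N) (fun _ : X => M) (by rw [map_zero]; exact h3)
  exact (TensorProduct.comm k (X → M) (Y → N)).map_eq_zero_iff.mp h4
end
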